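/- Let a, b be real numbers and let t be chosen uniformly at random from [0, 1], where a², b² ≤ 1. Define x_t(a) = 1 if a ≥ √t, x_t(a) = -1 if a ≤ -√t, and x_t(a) = 0 otherwise (similarly for b). Then E[|x_t(a) + x_t(b)|] ≤ |a + b| · (|a| + |b|). -/

import Mathlib

open MeasureTheory Set

/-- The two-sided threshold rounding of a value `a` at threshold `t`. -/
noncomputable def roundVal (t a : ℝ) : ℝ :=
  if Real.sqrt t ≤ a then 1 else if a ≤ -Real.sqrt t then -1 else 0

lemma rv_nonneg {a t : ℝ} (ha : 0 ≤ a) (ht : 0 < t) :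
    roundVal t a = if t ≤ a ^ 2 then 1 else 0 := by
  have hs : 0 < Real.sqrt t := Real.sqrt_pos.mpr ht
  unfold roundVal
  have h2 : ¬ a ≤ -Real.sqrt t := by nlinarith
  simp [h2, Real.sqrt_le_left ha]

lemma rv_nonpos {a t : ℝ} (ha : a ≤ 0) (ht : 0 < t) :
    roundVal t a = if t ≤ a ^ 2 then -1 else 0 := by
  have hs : 0 < Real.sqrt t := Real.sqrt_pos.mpr ht
  unfold roundVal
  have h1 : ¬ Real.sqrt t ≤ a := by nlinarith
  have h2 : a ≤ -Real.sqrt t ↔ t ≤ a ^ 2 := by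
    rw [← neg_le_neg_iff, neg_neg, Real.sqrt_le_left (by linarith), neg_pow]
    simp
  simp [h1, h2]

lemma step_eq_indicator (c : ℝ) :
    (fun t => if t ≤ c then (1:ℝ) else 0) = Set.indicator (Set.Iic c) (fun _ => 1) := by
  ext t
  simp [Set.indicator, Set.mem_Iic]

lemma step_intable (c : ℝ) :
    IntervalIntegrable (fun t => if t ≤ c then (1:ℝ) else 0) volume 0 1 := by
  rw [step_eq_indicator, intervalIntegrable_iff]
  exact ((integrableOn_const_iff (C := (1:ℝ))).mpr (Or.inr measure_Ioc_lt_top)).indicator measurableSet_Iic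

lemma step_integral {c : ℝ} (h0 : 0 ≤ c) (h1 : c ≤ 1) :
    ∫ t in (0:ℝ)..1, (if t ≤ c then (1:ℝ) else 0) = c := by
  rw [step_eq_indicator, intervalIntegral.integral_of_le zero_le_one,
    integral_indicator measurableSet_Iic, Measure.restrict_restrict measurableSet_Iic]
  have hset : Set.Iic c ∩ Set.Ioc 0 1 = Set.Ioc 0 c := by
    ext x
    simp only [Set.mem_inter_iff, Set.mem_Iic, Set.mem_Ioc]
    constructor
    · rintro ⟨h, h', _⟩; exact ⟨h', h⟩
    · rintro ⟨h, h'⟩; exact ⟨h', h, by linarith⟩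
  rw [hset]
  simp [Real.volume_Ioc, ENNReal.toReal_ofReal h0, h0]

theorem stmt_2 (a b : ℝ) (ha : a ^ 2 ≤ 1) (hb : b ^ 2 ≤ 1) :
    ∫ t in (0:ℝ)..1, |roundVal t a + roundVal t b| ≤ |a + b| * (|a| + |b|) := by
  have ha0 : (0:ℝ) ≤ a ^ 2 := sq_nonneg a
  have hb0 : (0:ℝ) ≤ b ^ 2 := sq_nonneg b
  -- helper for the same-sign case
  have same_sign :
      ∀ (u v : ℝ), 0 ≤ u → 0 ≤ v → u ^ 2 ≤ 1 → v ^ 2 ≤ 1 →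
        ∫ t in (0:ℝ)..1, |roundVal t u + roundVal t v|
          = u ^ 2 + v ^ 2 := by
    intro u v hu hv hu1 hv1
    have hcong : ∀ᵐ t ∂volume, t ∈ Set.uIoc (0:ℝ) 1 →
        |roundVal t u + roundVal t v|
          = (if t ≤ u ^ 2 then (1:ℝ) else 0) + (if t ≤ v ^ 2 then (1:ℝ) else 0) := by
      filter_upwards with t ht
      rw [Set.uIoc_of_le zero_le_one] at ht
      rw [rv_nonneg hu ht.1, rv_nonneg hv ht.1]
      split_ifs <;> norm_num
    rw [intervalIntegral.integral_congr_ae hcong,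
      intervalIntegral.integral_add (step_intable _) (step_intable _),
      step_integral (sq_nonneg u) hu1, step_integral (sq_nonneg v) hv1]
  have mixed :
      ∀ (u v : ℝ), 0 ≤ u → v ≤ 0 → u ^ 2 ≤ 1 → v ^ 2 ≤ 1 →
        ∫ t in (0:ℝ)..1, |roundVal t u + roundVal t v|
          = |u ^ 2 - v ^ 2| := by
    intro u v hu hv hu1 hv1
    have hcong : ∀ᵐ t ∂volume, t ∈ Set.uIoc (0:ℝ) 1 →
        |roundVal t u + roundVal t v|
          = (if t ≤ max (u ^ 2) (v ^ 2) then (1:ℝ) else 0)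
            - (if t ≤ min (u ^ 2) (v ^ 2) then (1:ℝ) else 0) := by
      filter_upwards with t ht
      rw [Set.uIoc_of_le zero_le_one] at ht
      rw [rv_nonneg hu ht.1, rv_nonpos hv ht.1]
      rcases le_total (u ^ 2) (v ^ 2) with h | h
      · rw [max_eq_right h, min_eq_left h]
        split_ifs <;> norm_num <;> linarith
      · rw [max_eq_left h, min_eq_right h]
        split_ifs <;> norm_num <;> linarith
    rw [intervalIntegral.integral_congr_ae hcong,
      intervalIntegral.integral_sub (step_intable _) (step_intable _),
      step_integral (le_trans (sq_nonneg u) (le_max_left _ _)) (max_le hu1 hv1),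
      step_integral (le_min (sq_nonneg u) (sq_nonneg v)) (le_trans (min_le_left _ _) hu1)]
    rw [abs_sub_comm]; exact max_sub_min_eq_abs (u ^ 2) (v ^ 2)
  -- negation symmetry: roundVal t (-x) = -roundVal t x for t > 0 handled within cases
  rcases le_total 0 a with hA | hA <;> rcases le_total 0 b with hB | hB
  · -- both nonneg
    rw [same_sign a b hA hB ha hb]
    have h1 : |a + b| = a + b := abs_of_nonneg (by linarith)
    have h2 : |a| = a := abs_of_nonneg hA
    have h3 : |b| = b := abs_of_nonneg hB
    rw [h1, h2, h3]; nlinarith [mul_nonneg hA hB]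
  · -- a ≥ 0, b ≤ 0
    rw [mixed a b hA hB ha hb]
    have habs : |a ^ 2 - b ^ 2| = |a + b| * (a - b) := by
      have : a ^ 2 - b ^ 2 = (a + b) * (a - b) := by ring
      rw [this, abs_mul, abs_of_nonneg (by linarith : (0:ℝ) ≤ a - b)]
    rw [habs, abs_of_nonneg hA, abs_of_nonpos hB]
    linarith
  · -- a ≤ 0, b ≥ 0
    have hcomm : ∀ t, roundVal t a + roundVal t b = roundVal t b + roundVal t a := by
      intro t; ring
    simp_rw [hcomm]
    rw [mixed b a hB hA hb ha]
    have habs : |b ^ 2 - a ^ 2| = |a + b| * (b - a) := by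
      have : b ^ 2 - a ^ 2 = (a + b) * (b - a) := by ring
      rw [this, abs_mul, abs_of_nonneg (by linarith : (0:ℝ) ≤ b - a)]
    rw [habs, abs_of_nonpos hA, abs_of_nonneg hB]
    linarith
  · -- both nonpos: use neg symmetry via direct pointwise identity
    have hcong : ∀ᵐ t ∂volume, t ∈ Set.uIoc (0:ℝ) 1 →
        |roundVal t a + roundVal t b|
          = (if t ≤ a ^ 2 then (1:ℝ) else 0) + (if t ≤ b ^ 2 then (1:ℝ) else 0) := by
      filter_upwards with t ht
      rw [Set.uIoc_of_le zero_le_one] at ht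
      rw [rv_nonpos hA ht.1, rv_nonpos hB ht.1]
      split_ifs <;> norm_num
    rw [intervalIntegral.integral_congr_ae hcong,
      intervalIntegral.integral_add (step_intable _) (step_intable _),
      step_integral ha0 ha, step_integral hb0 hb]
    have h1 : |a + b| = -(a + b) := abs_of_nonpos (by linarith)
    have h2 : |a| = -a := abs_of_nonpos hA
    have h3 : |b| = -b := abs_of_nonpos hB
    rw [h1, h2, h3]; nlinarith [mul_nonneg (neg_nonneg.mpr hA) (neg_nonneg.mpr hB)]
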